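/- Fix y' ∈ ℝ, a point p ∈ ℝ², and a finite nonempty set T ⊆ ℝ². Then: (i) there exists x* ∈ ℝ with h_{→p}((x*, y')) = h_{←T}((x*, y')); (ii) for every such x*, max_{q ∈ T} δ'_{pq}(y') = h_{←T}((x*, y')) = h_{→p}((x*, y')); and (iii) max_{q ∈ T} δ'_{pq}(y') = inf_{x ∈ ℝ} max{ h_{→p}((x, y')), h_{←T}((x, y')) }. -/
import Mathlib


open Metric Set

noncomputable section

/-- Points of the Euclidean plane ℝ². -/
abbrev Pt : Type := EuclideanSpace ℝ (Fin 2)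

/-- The point (x, y) ∈ ℝ². -/
def pt (x y : ℝ) : Pt := (WithLp.equiv 2 (Fin 2 → ℝ)).symm ![x, y]

/-- The leftward horizontal halfline ←p = {(x, y_p) : x ≤ x_p}. -/
def leftRay (p : Pt) : Set Pt := {z : Pt | z 1 = p 1 ∧ z 0 ≤ p 0}

/-- The rightward horizontal halfline →p = {(x, y_p) : x ≥ x_p}. -/
def rightRay (p : Pt) : Set Pt := {z : Pt | z 1 = p 1 ∧ p 0 ≤ z 0}

/-- h_{←p}(q): Euclidean distance from q to the leftward halfline at p. -/
def hL (p q : Pt) : ℝ := infDist q (leftRay p)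

/-- h_{→p}(q): Euclidean distance from q to the rightward halfline at p. -/
def hR (p q : Pt) : ℝ := infDist q (rightRay p)

/-- h_{←S}(q) = max_{p ∈ S} h_{←p}(q). -/
def hLS (S : Finset Pt) (hS : S.Nonempty) (q : Pt) : ℝ := S.sup' hS fun p => hL p q

/-- h_{→S}(q) = max_{p ∈ S} h_{→p}(q). -/
def hRS (S : Finset Pt) (hS : S.Nonempty) (q : Pt) : ℝ := S.sup' hS fun p => hR p q

/-- δ_{pq}(y) = inf_x max{‖(x,y) − p‖, ‖(x,y) − q‖}. -/
def delta (p q : Pt) (y : ℝ) : ℝ := ⨅ x : ℝ, max ‖pt x y - p‖ ‖pt x y - q‖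

/-- δ'_{pq}(y) = inf_x max{h_{←q}((x,y)), h_{→p}((x,y))}. -/
def delta' (p q : Pt) (y : ℝ) : ℝ := ⨅ x : ℝ, max (hL q (pt x y)) (hR p (pt x y))



lemma le_infDist' {s : Set Pt} (hs : s.Nonempty) {x : Pt} {b : ℝ}
    (h : ∀ y ∈ s, b ≤ dist x y) : b ≤ infDist x s := by
  by_contra hb
  push_neg at hb
  obtain ⟨y, hy, hlt⟩ := (infDist_lt_iff hs).1 hb
  exact absurd (h y hy) (not_le.2 hlt)

lemma pt0 (x y : ℝ) : pt x y 0 = x := rfl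
lemma pt1 (x y : ℝ) : pt x y 1 = y := rfl

lemma dist_pt_eq (x y : ℝ) (z : Pt) :
    dist (pt x y) z = Real.sqrt ((x - z 0)^2 + (y - z 1)^2) := by
  rw [EuclideanSpace.dist_eq, Fin.sum_univ_two]
  simp [pt0, pt1, Real.dist_eq, sq_abs]

lemma hR_eq (p : Pt) (x y : ℝ) :
    hR p (pt x y) = Real.sqrt ((max (p 0 - x) 0)^2 + (y - p 1)^2) := by
  have hm : pt (max x (p 0)) (p 1) ∈ rightRay p := ⟨rfl, le_max_right _ _⟩
  refine le_antisymm ?_ ?_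
  · refine le_trans (infDist_le_dist_of_mem hm) ?_
    rw [dist_pt_eq, pt0, pt1]
    apply le_of_eq
    rcases le_total x (p 0) with h | h
    · rw [max_eq_right h, max_eq_left (by linarith)]
      ring_nf
    · rw [max_eq_left h, max_eq_right (by linarith)]
      norm_num
  · rw [hR]
    refine le_infDist' ⟨_, hm⟩ ?_
    rintro z ⟨hz1, hz0⟩
    rw [dist_pt_eq, hz1]
    apply Real.sqrt_le_sqrt
    have h1 : (0:ℝ) ≤ max (p 0 - x) 0 := le_max_right _ _
    have h2 : max (p 0 - x) 0 ≤ |x - z 0| := by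
      rcases le_total (p 0 - x) 0 with h | h
      · rw [max_eq_right h]; positivity
      · rw [max_eq_left h]
        calc p 0 - x ≤ z 0 - x := by linarith
          _ ≤ |x - z 0| := by rw [abs_sub_comm]; exact le_abs_self _
    nlinarith [sq_abs (x - z 0)]

lemma hL_eq (q : Pt) (x y : ℝ) :
    hL q (pt x y) = Real.sqrt ((max (x - q 0) 0)^2 + (y - q 1)^2) := by
  have hm : pt (min x (q 0)) (q 1) ∈ leftRay q := ⟨rfl, min_le_right _ _⟩
  refine le_antisymm ?_ ?_
  · refine le_trans (infDist_le_dist_of_mem hm) ?_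
    rw [dist_pt_eq, pt0, pt1]
    apply le_of_eq
    rcases le_total x (q 0) with h | h
    · rw [min_eq_left h, max_eq_right (by linarith)]
      norm_num
    · rw [min_eq_right h, max_eq_left (by linarith)]
  · rw [hL]
    refine le_infDist' ⟨_, hm⟩ ?_
    rintro z ⟨hz1, hz0⟩
    rw [dist_pt_eq, hz1]
    apply Real.sqrt_le_sqrt
    have h1 : (0:ℝ) ≤ max (x - q 0) 0 := le_max_right _ _
    have h2 : max (x - q 0) 0 ≤ |x - z 0| := by
      rcases le_total (x - q 0) 0 with h | h
      · rw [max_eq_right h]; positivity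
      · rw [max_eq_left h]
        calc x - q 0 ≤ x - z 0 := by linarith
          _ ≤ |x - z 0| := le_abs_self _
    nlinarith [sq_abs (x - z 0)]

lemma hR_anti (p : Pt) (y : ℝ) : Antitone fun x => hR p (pt x y) := by
  intro a b hab
  simp only [hR_eq]
  apply Real.sqrt_le_sqrt
  have h1 : (0:ℝ) ≤ max (p 0 - b) 0 := le_max_right _ _
  have h2 : max (p 0 - b) 0 ≤ max (p 0 - a) 0 := max_le_max (by linarith) le_rfl
  nlinarith

lemma hL_mono (q : Pt) (y : ℝ) : Monotone fun x => hL q (pt x y) := by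
  intro a b hab
  simp only [hL_eq]
  apply Real.sqrt_le_sqrt
  have h1 : (0:ℝ) ≤ max (a - q 0) 0 := le_max_right _ _
  have h2 : max (a - q 0) 0 ≤ max (b - q 0) 0 := max_le_max (by linarith) le_rfl
  nlinarith

lemma hR_cont (p : Pt) (y : ℝ) : Continuous fun x => hR p (pt x y) := by
  simp only [hR_eq]
  exact ((((continuous_const.sub continuous_id).max continuous_const).pow 2).add
    continuous_const).sqrt

lemma hL_cont (q : Pt) (y : ℝ) : Continuous fun x => hL q (pt x y) := by
  simp only [hL_eq]
  exact ((((continuous_id.sub continuous_const).max continuous_const).pow 2).add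
    continuous_const).sqrt

lemma hR_const (p : Pt) {x : ℝ} (y : ℝ) (h : p 0 ≤ x) : hR p (pt x y) = |y - p 1| := by
  rw [hR_eq, max_eq_right (by linarith)]
  simp [Real.sqrt_sq_eq_abs]

lemma hL_const (q : Pt) {x : ℝ} (y : ℝ) (h : x ≤ q 0) : hL q (pt x y) = |y - q 1| := by
  rw [hL_eq, max_eq_right (by linarith)]
  simp [Real.sqrt_sq_eq_abs]

lemma hR_ge (p : Pt) (x y : ℝ) : p 0 - x ≤ hR p (pt x y) := by
  rw [hR_eq]
  refine le_trans (le_max_left _ 0) ?_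
  refine le_trans ?_ (Real.sqrt_le_sqrt (le_add_of_nonneg_right (sq_nonneg _)))
  rw [Real.sqrt_sq (le_max_right _ _)]

lemma hL_ge (q : Pt) (x y : ℝ) : x - q 0 ≤ hL q (pt x y) := by
  rw [hL_eq]
  refine le_trans (le_max_left _ 0) ?_
  refine le_trans ?_ (Real.sqrt_le_sqrt (le_add_of_nonneg_right (sq_nonneg _)))
  rw [Real.sqrt_sq (le_max_right _ _)]

lemma hL_nonneg (q z : Pt) : 0 ≤ hL q z := infDist_nonneg
lemma hR_nonneg (q z : Pt) : 0 ≤ hR q z := infDist_nonneg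


theorem stmt_9 (y' : ℝ) (p : Pt) (T : Finset Pt) (hT : T.Nonempty) :
    (∃ xs : ℝ, hR p (pt xs y') = hLS T hT (pt xs y')) ∧
    (∀ xs : ℝ, hR p (pt xs y') = hLS T hT (pt xs y') →
      T.sup' hT (fun q => delta' p q y') = hLS T hT (pt xs y') ∧
      T.sup' hT (fun q => delta' p q y') = hR p (pt xs y')) ∧
    T.sup' hT (fun q => delta' p q y') =
      ⨅ x : ℝ, max (hR p (pt x y')) (hLS T hT (pt x y')) := by

  set f : ℝ → ℝ := fun x => hR p (pt x y') with hf
  set g : ℝ → ℝ := fun x => hLS T hT (pt x y') with hg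
  have hgdef : ∀ x, g x = T.sup' hT fun q => hL q (pt x y') := fun x => rfl
  have hf_anti : Antitone f := hR_anti p y'
  have hg_mono : Monotone g := by
    intro a b hab
    rw [hgdef a, hgdef b]
    exact Finset.sup'_le _ _ fun q hq =>
      le_trans (hL_mono q y' hab) (Finset.le_sup' (fun q => hL q (pt b y')) hq)
  have hf_cont : Continuous f := hR_cont p y'
  have hg_cont : Continuous g := by
    have key : ∀ (S : Finset Pt) (hS : S.Nonempty),
        Continuous fun x => S.sup' hS fun q => hL q (pt x y') := by
      intro S hS
      induction hS using Finset.Nonempty.cons_induction with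
      | singleton a => simpa using hL_cont a y'
      | cons a s ha hs ih =>
        have h : ∀ x, (Finset.cons a s ha).sup' (Finset.cons_nonempty ha)
            (fun q => hL q (pt x y')) = (hL a (pt x y')) ⊔ (s.sup' hs fun q => hL q (pt x y')) :=
          fun x => Finset.sup'_cons hs _
        simp only [h]
        exact (hL_cont a y').max ih
    exact key T hT
  obtain ⟨q1, hq1⟩ := id hT
  -- existence of a crossing point
  have hexist : ∃ xs : ℝ, f xs = g xs := by
    set cp := |y' - p 1| with hcp
    set cg := T.sup' hT fun q => |y' - q 1| with hcgdef
    set a0 := T.inf' hT fun q => q 0 with ha0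
    have hcg0 : (0:ℝ) ≤ cg := le_trans (abs_nonneg _) (Finset.le_sup' (fun q => |y' - q 1|) hq1)
    have hcp0 : (0:ℝ) ≤ cp := abs_nonneg _
    set a := min a0 (p 0 - cg) with hadef
    set b := max (p 0) (q1 0 + cp) with hbdef
    have hab : a ≤ b := by
      refine le_trans (min_le_left _ _) (le_trans (Finset.inf'_le _ hq1) ?_)
      refine le_trans (le_add_of_nonneg_right hcp0) (le_max_right _ _)
    have hga : g a ≤ f a := by
      have h1 : g a ≤ cg := by
        rw [hgdef]
        refine Finset.sup'_le _ _ fun q hq => ?_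
        rw [hL_const q y' (le_trans (min_le_left _ _) (Finset.inf'_le _ hq))]
        exact Finset.le_sup' (fun q => |y' - q 1|) hq
      have h2 : cg ≤ f a := by
        refine le_trans ?_ (hR_ge p a y')
        have : a ≤ p 0 - cg := min_le_right _ _
        linarith
      linarith
    have hfb : f b ≤ g b := by
      have h1 : f b = cp := hR_const p y' (le_max_left _ _)
      have h2 : cp ≤ g b := by
        rw [hgdef]
        refine le_trans ?_ (Finset.le_sup' (fun q => hL q (pt b y')) hq1)
        refine le_trans ?_ (hL_ge q1 b y')
        have : q1 0 + cp ≤ b := le_max_right _ _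
        linarith
      linarith
    have hcont : ContinuousOn (fun x => f x - g x) (Icc a b) :=
      (hf_cont.sub hg_cont).continuousOn
    have hmem : (0:ℝ) ∈ Icc (f b - g b) (f a - g a) := ⟨by linarith, by linarith⟩
    obtain ⟨xs, _, hxs⟩ := intermediate_value_Icc' hab hcont hmem
    exact ⟨xs, sub_eq_zero.mp hxs⟩
  have bdd : ∀ q : Pt, BddBelow (Set.range fun x => max (hL q (pt x y')) (hR p (pt x y'))) := by
    intro q
    refine ⟨0, ?_⟩
    rintro r ⟨x, rfl⟩
    exact le_max_of_le_left (hL_nonneg _ _)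
  have part2 : ∀ xs : ℝ, f xs = g xs →
      T.sup' hT (fun q => delta' p q y') = g xs ∧
      T.sup' hT (fun q => delta' p q y') = f xs := by
    intro xs hx
    have hub : T.sup' hT (fun q => delta' p q y') ≤ f xs := by
      refine Finset.sup'_le _ _ fun q hq => ?_
      calc delta' p q y' ≤ max (hL q (pt xs y')) (hR p (pt xs y')) := ciInf_le (bdd q) xs
        _ ≤ max (g xs) (f xs) := by
          refine max_le_max ?_ le_rfl
          rw [hgdef xs]
          exact Finset.le_sup' (fun q => hL q (pt xs y')) hq
        _ = f xs := by rw [hx, max_self]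
    have hlb : f xs ≤ T.sup' hT (fun q => delta' p q y') := by
      obtain ⟨q0, hq0mem, hq0⟩ := Finset.exists_mem_eq_sup' hT (fun q => hL q (pt xs y'))
      refine le_trans ?_ (Finset.le_sup' (fun q => delta' p q y') hq0mem)
      rw [delta']
      refine le_ciInf fun x => ?_
      rcases le_total x xs with h | h
      · exact le_max_of_le_right (hf_anti h)
      · refine le_max_of_le_left ?_
        calc f xs = g xs := hx
          _ = hL q0 (pt xs y') := by rw [hgdef, hq0]
          _ ≤ hL q0 (pt x y') := hL_mono q0 y' h
    have heq : T.sup' hT (fun q => delta' p q y') = f xs := le_antisymm hub hlb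
    exact ⟨heq.trans hx, heq⟩
  refine ⟨hexist, part2, ?_⟩
  obtain ⟨xs, hxs⟩ := hexist
  rw [(part2 xs hxs).2]
  refine le_antisymm ?_ ?_
  · refine le_ciInf fun x => ?_
    rcases le_total x xs with h | h
    · exact le_max_of_le_left (hf_anti h)
    · exact le_max_of_le_right (hxs ▸ hg_mono h)
  · have bdd2 : BddBelow (Set.range fun x => max (f x) (g x)) := by
      refine ⟨0, ?_⟩
      rintro r ⟨x, rfl⟩
      exact le_max_of_le_left (hR_nonneg _ _)
    calc (⨅ x : ℝ, max (f x) (g x)) ≤ max (f xs) (g xs) := ciInf_le bdd2 xs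
      _ = f xs := by rw [hxs, max_self]
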